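/- In the ranking-function algorithm, the computed ξ satisfies the ranking-function condition of Definition 2: for all x ∈ X_P and all uncontrollable σ defined at x, ξ(x) ≥ min{ξ(δ_P(x, σ)) + Ī_{F_P}(x), α}, where Ī_{F_P}(x) = 1 iff x ∉ F_P. -/

import Mathlib

open scoped Classical

/-- Extended (partial) transition function on finite event sequences. -/
def runOf {X E : Type} (δ : X → E → Option X) : List E → X → Option X
  | [], x => some x
  | e :: s, x => (δ x e).bind (runOf δ s)

/-- A string consisting only of unobservable events. -/
def UOString {E : Type} (uo : E → Prop) (s : List E) : Prop := ∀ e ∈ s, uo e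

/-- Natural projection erasing unobservable events. -/
noncomputable def proj {E : Type} (uo : E → Prop) (s : List E) : List E :=
  s.filter (fun e => decide (¬ uo e))

/-- Legal control pattern: events with some strictly rank-decreasing occurrence
within the unobservable reach of `x`. -/
def gammaLeg {X E : Type} (δ : X → E → Option X) (uo : E → Prop)
    (ξ : X → ℕ) (x : X) : Set E :=
  {σ | ∃ s y z, UOString uo s ∧ runOf δ s x = some y ∧ δ y σ = some z ∧ ξ z < ξ y}

/-- Unobservable reach of `x` under control pattern `γ`. -/
def UR {X E : Type} (δ : X → E → Option X) (uo : E → Prop)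
    (γ : Set E) (x : X) : Set X :=
  {x' | ∃ u : List E, (∀ e ∈ u, uo e ∧ e ∈ γ) ∧ runOf δ u x = some x'}

/-- Membership in the next-state estimate `NS(s_o)` after observation `s_o`. -/
inductive NSmem {X E : Type} (δ : X → E → Option X) (uo : E → Prop)
    (x0 : X) : List E → X → Prop
  | init : NSmem δ uo x0 [] x0
  | step {so : List E} {x x' x'' : X} {σ : E} :
      NSmem δ uo x0 so x →
      x' ∈ UR δ uo Set.univ x →
      ¬ uo σ → δ x' σ = some x'' → NSmem δ uo x0 (so ++ [σ]) x''

/-- Joint legal control pattern of the state estimate. -/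
def gammaLegNS {X E : Type} (δ : X → E → Option X) (uo : E → Prop) (ξ : X → ℕ)
    (x0 : X) (so : List E) : Set E :=
  {σ | ∃ x, NSmem δ uo x0 so x ∧ σ ∈ gammaLeg δ uo ξ x}

/-- Permissive control pattern at state `x` and step `k`. -/
def gammaPer {X E : Type} (δ : X → E → Option X) (uo : E → Prop) (ξ : X → ℕ)
    (η : ℕ → ℝ) (x : X) (k : ℕ) : Set E :=
  {σ | ∀ s z, UOString uo s → runOf δ (s ++ [σ]) x = some z → (ξ z : ℝ) < η k}

/-- Joint permissive control pattern of the state estimate. -/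
def gammaPerNS {X E : Type} (δ : X → E → Option X) (uo : E → Prop) (ξ : X → ℕ)
    (η : ℕ → ℝ) (x0 : X) (so : List E) (k : ℕ) : Set E :=
  {σ | ∀ x, NSmem δ uo x0 so x → σ ∈ gammaPer δ uo ξ η x k}

/-- The on-line supervisor's control action after observation `so`. -/
def supAct {X E : Type} (δ : X → E → Option X) (uo : E → Prop) (ξ : X → ℕ)
    (η : ℕ → ℝ) (x0 : X) (so : List E) : Set E :=
  gammaLegNS δ uo ξ x0 so ∪ gammaPerNS δ uo ξ η x0 so so.length

/-- `ξ̂(x)`: min over controllable successors' ranks if no uncontrollable event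
is defined at `x`, else max over uncontrollable successors' ranks. -/
noncomputable def hatXi {X E : Type} (δ : X → E → Option X) (uc : E → Prop)
    (ξ : X → ℕ) (x : X) : ℕ :=
  if ∀ e, uc e → δ x e = none then
    sInf {n | ∃ e y, ¬ uc e ∧ δ x e = some y ∧ ξ y = n}
  else
    sSup {n | ∃ e y, uc e ∧ δ x e = some y ∧ ξ y = n}

/-- The update operator `up_α(r, x)`. -/
noncomputable def upA {X : Type} (α : ℕ) (F : Set X) (x : X) (r : ℕ) : ℕ :=
  if x ∉ F ∧ r < α then r + 1 else r

/-- Observability of the product automaton w.r.t. `ξ` and the projection. -/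
def Observable {X E : Type} (δ : X → E → Option X) (uo : E → Prop)
    (ξ : X → ℕ) (x0 : X) : Prop :=
  ∀ s s' : List E, ∀ σ : E,
    (runOf δ s x0).isSome → (runOf δ s' x0).isSome →
    proj uo s = proj uo s' →
    (∃ y z, runOf δ s x0 = some y ∧ δ y σ = some z ∧ ξ z < ξ y) →
    (runOf δ (s' ++ [σ]) x0).isSome →
    ∃ y z, runOf δ s' x0 = some y ∧ δ y σ = some z ∧ ξ z < ξ y

/-- The list of states visited along a run. -/
def visited {X E : Type} (δ : X → E → Option X) : List E → X → Option (List X)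
  | [], x => some [x]
  | e :: s, x => (δ x e).bind fun y => (visited δ s y).map (fun l => x :: l)

/-- the fixed-point ranking function satisfies the
ranking-function condition of Definition 2. -/
theorem stmt16 {X E : Type} [Fintype X] (δ : X → E → Option X) (uc : E → Prop)
    (F : Finset X)
    (hdf : ∀ x : X, ∃ e, (δ x e).isSome)
    (ξ : X → ℕ)
    (hfix : ∀ x, upA (Fintype.card X - F.card + 1) (↑F) x (hatXi δ uc ξ x) ≤ ξ x)
    (hleast : ∀ ξ' : X → ℕ,
      (∀ x, upA (Fintype.card X - F.card + 1) (↑F) x (hatXi δ uc ξ' x) ≤ ξ' x) →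
      ∀ x, ξ x ≤ ξ' x) :
    ∀ (x : X) (e : E) (y : X), uc e → δ x e = some y →
      min (ξ y + (if x ∈ F then 0 else 1)) (Fintype.card X - F.card + 1)
        ≤ ξ x := by
  intro x e y hue hdel
  set α := Fintype.card X - F.card + 1 with hα
  have hne : ¬ ∀ e', uc e' → δ x e' = none := by
    intro h; have := h e hue; rw [hdel] at this; exact Option.some_ne_none y this
  have hhat : hatXi δ uc ξ x = sSup {n | ∃ e y, uc e ∧ δ x e = some y ∧ ξ y = n} := by
    simp [hatXi, hne]
  have hbdd : BddAbove {n | ∃ e y, uc e ∧ δ x e = some y ∧ ξ y = n} := by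
    apply Set.Finite.bddAbove
    apply Set.Finite.subset (Set.finite_range ξ)
    rintro n ⟨e', y', _, _, rfl⟩; exact ⟨y', rfl⟩
  have hle : ξ y ≤ hatXi δ uc ξ x := by
    rw [hhat]; exact le_csSup hbdd ⟨e, y, hue, hdel, rfl⟩
  have hfx := hfix x
  unfold upA at hfx
  by_cases hF : x ∈ F
  · simp only [hF, if_pos, if_neg, Finset.mem_coe, not_true, false_and, if_false] at hfx ⊢
    omega
  · simp only [hF, Finset.mem_coe, not_false_iff, true_and, if_neg] at hfx ⊢
    by_cases hlt : hatXi δ uc ξ x < α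
    · rw [if_pos hlt] at hfx; omega
    · rw [if_neg hlt] at hfx; omega
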